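/- arXiv:1708.02168 — 6 statements merged into one kernel-verified Lean document; each statement's English description precedes it below -/
import Mathlib

section
/- Let N ≥ 1 be an integer and let P, Q : ℝ → ℝ be continuous functions such that for every ε > 0 there exists T > 0 with |P(t)| ≤ ε·|Q(t)| whenever |t| ≥ T. Let (v_n)_{n≥1}, v and z be Lebesgue measurable functions from ℝ^N to ℝ such that z is integrable on every bounded Borel set, sup_{n≥1} ∫_{ℝ^N} |Q(v_n(x))·z(x)| dx < +∞, and P(v_n(x)) → v(x) for almost every x ∈ ℝ^N as n → +∞. Then for every bounded Borel set Ω ⊆ ℝ^N one has ∫_Ω |P(v_n(x)) − v(x)|·|z(x)| dx → 0 as n → +∞. -/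
open MeasureTheory Filter Topology ENNReal

theorem stmt_0 (N : ℕ) (hN : 1 ≤ N) (P Q : ℝ → ℝ)
    (hP : Continuous P) (hQ : Continuous Q)
    (hPQ : ∀ ε > (0:ℝ), ∃ T > (0:ℝ), ∀ t : ℝ, T ≤ |t| → |P t| ≤ ε * |Q t|)
    (v : ℕ → EuclideanSpace ℝ (Fin N) → ℝ) (vlim z : EuclideanSpace ℝ (Fin N) → ℝ)
    (hv : ∀ n, Measurable (v n)) (hvlim : Measurable vlim) (hz : Measurable z)
    (hzloc : ∀ Ω : Set (EuclideanSpace ℝ (Fin N)), MeasurableSet Ω → Bornology.IsBounded Ω →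
      IntegrableOn z Ω volume)
    (hsup : ∃ C : ℝ≥0∞, C < ⊤ ∧ ∀ n, ∫⁻ x, ‖Q (v n x) * z x‖₊ ∂volume ≤ C)
    (hae : ∀ᵐ x ∂volume, Tendsto (fun n => P (v n x)) atTop (𝓝 (vlim x))) :
    ∀ Ω : Set (EuclideanSpace ℝ (Fin N)), MeasurableSet Ω → Bornology.IsBounded Ω →
      Tendsto (fun n => ∫ x in Ω, |P (v n x) - vlim x| * |z x| ∂volume) atTop (𝓝 0) := by
  intro Ω hΩ hbd
  obtain ⟨C, hClt, hCle⟩ := hsup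
  -- measurability of the compositions
  have mP : ∀ n, Measurable fun x => P (v n x) := fun n => hP.measurable.comp (hv n)
  have mQ : ∀ n, Measurable fun x => Q (v n x) := fun n => hQ.measurable.comp (hv n)
  -- finiteness of ∫⁻_Ω |z|
  have hzfin : ∫⁻ x in Ω, ENNReal.ofReal |z x| ∂volume < ⊤ := by
    have h := (hzloc Ω hΩ hbd).hasFiniteIntegral
    rw [hasFiniteIntegral_iff_norm] at h
    simpa [Real.norm_eq_abs] using h
  -- the Q-bound on Ω
  have hQle : ∀ n, ∫⁻ x in Ω, ENNReal.ofReal (|Q (v n x)| * |z x|) ∂volume ≤ C := by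
    intro n
    calc ∫⁻ x in Ω, ENNReal.ofReal (|Q (v n x)| * |z x|) ∂volume
        ≤ ∫⁻ x, ENNReal.ofReal (|Q (v n x)| * |z x|) ∂volume :=
          setLIntegral_le_lintegral _ _
      _ = ∫⁻ x, (‖Q (v n x) * z x‖₊ : ℝ≥0∞) ∂volume := by
          refine lintegral_congr fun x => ?_
          rw [← abs_mul, ← Real.norm_eq_abs, ofReal_norm_eq_enorm, enorm_eq_nnnorm]
      _ ≤ C := hCle n
  -- key truncation bound: for every δ > 0 there is M ≥ 0 with
  -- |P (v n x)| * |z x| ≤ M * |z x| + δ * (|Q (v n x)| * |z x|)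
  have key : ∀ δ : ℝ, 0 < δ → ∃ M : ℝ, 0 ≤ M ∧ ∀ (n : ℕ) (x : EuclideanSpace ℝ (Fin N)),
      |P (v n x)| * |z x| ≤ M * |z x| + δ * (|Q (v n x)| * |z x|) := by
    intro δ hδ
    obtain ⟨T, hT, hTP⟩ := hPQ δ hδ
    obtain ⟨M, hM⟩ := (isCompact_Icc (a := -T) (b := T)).exists_bound_of_continuousOn
      hP.continuousOn
    refine ⟨max M 0, le_max_right _ _, fun n x => ?_⟩
    rcases le_total (|v n x|) T with h | h
    · have h1 : |P (v n x)| ≤ max M 0 := by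
        have := hM (v n x) (Set.mem_Icc.mpr (abs_le.mp h))
        rw [Real.norm_eq_abs] at this
        exact this.trans (le_max_left _ _)
      have h2 : |P (v n x)| * |z x| ≤ max M 0 * |z x| :=
        mul_le_mul_of_nonneg_right h1 (abs_nonneg _)
      have h3 : 0 ≤ δ * (|Q (v n x)| * |z x|) := by positivity
      linarith
    · have h1 : |P (v n x)| ≤ δ * |Q (v n x)| := hTP _ h
      have h2 : |P (v n x)| * |z x| ≤ δ * (|Q (v n x)| * |z x|) := by
        have := mul_le_mul_of_nonneg_right h1 (abs_nonneg (z x))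
        linarith [this, mul_assoc δ (|Q (v n x)|) (|z x|)]
      have h3 : 0 ≤ max M 0 * |z x| := by positivity
      linarith
  -- per-n lintegral bound, given δ and M
  have perbound : ∀ δ : ℝ, 0 < δ → ∀ M : ℝ, 0 ≤ M →
      (∀ (n : ℕ) (x : EuclideanSpace ℝ (Fin N)),
        |P (v n x)| * |z x| ≤ M * |z x| + δ * (|Q (v n x)| * |z x|)) →
      ∀ n, ∫⁻ x in Ω, ENNReal.ofReal (|P (v n x)| * |z x|) ∂volume ≤
        ENNReal.ofReal M * (∫⁻ x in Ω, ENNReal.ofReal |z x| ∂volume) + ENNReal.ofReal δ * C := by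
    intro δ hδ M hM hb n
    have step1 : ∫⁻ x in Ω, ENNReal.ofReal (|P (v n x)| * |z x|) ∂volume ≤
        ∫⁻ x in Ω, (ENNReal.ofReal M * ENNReal.ofReal |z x| +
          ENNReal.ofReal δ * ENNReal.ofReal (|Q (v n x)| * |z x|)) ∂volume := by
      refine lintegral_mono fun x => ?_
      have := hb n x
      calc ENNReal.ofReal (|P (v n x)| * |z x|)
          ≤ ENNReal.ofReal (M * |z x| + δ * (|Q (v n x)| * |z x|)) := ENNReal.ofReal_le_ofReal this
        _ ≤ _ := by
            rw [ENNReal.ofReal_add (by positivity) (by positivity),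
              ENNReal.ofReal_mul hM, ENNReal.ofReal_mul hδ.le]
    rw [lintegral_add_left (by fun_prop) , lintegral_const_mul _ (by fun_prop),
      lintegral_const_mul _ (by fun_prop)] at step1
    exact step1.trans (add_le_add_right (mul_le_mul_right (hQle n) _) _)
  -- finiteness of ∫⁻_Ω |vlim|·|z|  (via Fatou)
  have hvfin : ∫⁻ x in Ω, ENNReal.ofReal (|vlim x| * |z x|) ∂volume < ⊤ := by
    obtain ⟨M, hM0, hMb⟩ := key 1 one_pos
    have hae' : ∀ᵐ x ∂(volume.restrict Ω),
        ENNReal.ofReal (|vlim x| * |z x|) ≤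
          liminf (fun n => ENNReal.ofReal (|P (v n x)| * |z x|)) atTop := by
      filter_upwards [ae_restrict_of_ae hae] with x hx
      have ht : Tendsto (fun n => ENNReal.ofReal (|P (v n x)| * |z x|)) atTop
          (𝓝 (ENNReal.ofReal (|vlim x| * |z x|))) :=
        (ENNReal.continuous_ofReal.tendsto _).comp ((hx.abs).mul_const _)
      exact ht.liminf_eq.ge
    have h1 : ∫⁻ x in Ω, ENNReal.ofReal (|vlim x| * |z x|) ∂volume ≤
        liminf (fun n => ∫⁻ x in Ω, ENNReal.ofReal (|P (v n x)| * |z x|) ∂volume) atTop := by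
      refine (lintegral_mono_ae hae').trans ?_
      exact lintegral_liminf_le fun n => by fun_prop
    have h2 : liminf (fun n => ∫⁻ x in Ω, ENNReal.ofReal (|P (v n x)| * |z x|) ∂volume) atTop ≤
        ENNReal.ofReal M * (∫⁻ x in Ω, ENNReal.ofReal |z x| ∂volume) + ENNReal.ofReal 1 * C := by
      refine (liminf_le_liminf (Eventually.of_forall
        (perbound 1 one_pos M hM0 hMb))).trans_eq (liminf_const _)
    refine (h1.trans h2).trans_lt ?_
    exact ENNReal.add_lt_top.mpr ⟨ENNReal.mul_lt_top ofReal_lt_top hzfin,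
      ENNReal.mul_lt_top ofReal_lt_top hClt⟩
  -- the main lintegral convergence
  have L : Tendsto (fun n => ∫⁻ x in Ω, ENNReal.ofReal (|P (v n x) - vlim x| * |z x|) ∂volume)
      atTop (𝓝 0) := by
    rw [ENNReal.tendsto_nhds_zero]
    intro ε hε
    -- choose δ with ofReal δ * C ≤ ε / 2
    set e : ℝ≥0∞ := min (ε / 2) 1 with he
    set D : ℝ≥0∞ := C + 1 with hD
    have hD0 : D ≠ 0 := by simp [hD]
    have heD : e / D ≠ ⊤ :=
      (ENNReal.div_lt_top ((min_le_right _ _).trans_lt one_lt_top).ne hD0).ne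
    have heD0 : e / D ≠ 0 :=
      ENNReal.div_ne_zero.mpr ⟨(lt_min (ENNReal.half_pos hε.ne') zero_lt_one).ne',
        (ENNReal.add_lt_top.mpr ⟨hClt, one_lt_top⟩).ne⟩
    set δ : ℝ := (e / D).toReal with hδdef
    have hδ : 0 < δ := ENNReal.toReal_pos heD0 heD
    have hδC : ENNReal.ofReal δ * C ≤ ε / 2 := by
      have h1 : ENNReal.ofReal δ = e / D := ENNReal.ofReal_toReal heD
      rw [h1]
      calc e / D * C ≤ e / D * D := by
            refine mul_le_mul_right ?_ _
            exact le_add_right le_rfl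
        _ = e := by
            rw [ENNReal.div_mul_cancel]
            · simp [hD]
            · exact (ENNReal.add_lt_top.mpr ⟨hClt, one_lt_top⟩).ne
        _ ≤ ε / 2 := min_le_left _ _
    obtain ⟨M, hM0, hMb⟩ := key δ hδ
    -- the dominating function
    set G : EuclideanSpace ℝ (Fin N) → ℝ≥0∞ :=
      fun x => ENNReal.ofReal M * ENNReal.ofReal |z x| + ENNReal.ofReal (|vlim x| * |z x|)
      with hGdef
    have hGmeas : Measurable G := by fun_prop
    have hGfin : ∫⁻ x in Ω, G x ∂volume ≠ ⊤ := by
      rw [lintegral_add_left (by fun_prop), lintegral_const_mul _ (by fun_prop)]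
      exact (ENNReal.add_lt_top.mpr ⟨ENNReal.mul_lt_top ofReal_lt_top hzfin, hvfin⟩).ne
    -- pointwise: F n x ≤ min (F n x) (G x) + ofReal δ * q n x
    have hdom : ∀ (n : ℕ) (x : EuclideanSpace ℝ (Fin N)),
        ENNReal.ofReal (|P (v n x) - vlim x| * |z x|) ≤
          min (ENNReal.ofReal (|P (v n x) - vlim x| * |z x|)) (G x) +
            ENNReal.ofReal δ * ENNReal.ofReal (|Q (v n x)| * |z x|) := by
      intro n x
      set a : ℝ≥0∞ := ENNReal.ofReal (|P (v n x) - vlim x| * |z x|)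
      have hle : a ≤ G x + ENNReal.ofReal δ * ENNReal.ofReal (|Q (v n x)| * |z x|) := by
        have hr : |P (v n x) - vlim x| * |z x| ≤
            (M * |z x| + |vlim x| * |z x|) + δ * (|Q (v n x)| * |z x|) := by
          have h1 : |P (v n x) - vlim x| ≤ |P (v n x)| + |vlim x| := abs_sub _ _
          have h2 := hMb n x
          have h3 : |P (v n x) - vlim x| * |z x| ≤ (|P (v n x)| + |vlim x|) * |z x| :=
            mul_le_mul_of_nonneg_right h1 (abs_nonneg _)
          nlinarith [abs_nonneg (z x), abs_nonneg (vlim x)]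
        calc a ≤ ENNReal.ofReal ((M * |z x| + |vlim x| * |z x|) + δ * (|Q (v n x)| * |z x|)) :=
              ENNReal.ofReal_le_ofReal hr
          _ = G x + ENNReal.ofReal δ * ENNReal.ofReal (|Q (v n x)| * |z x|) := by
              rw [ENNReal.ofReal_add (by positivity) (by positivity),
                ENNReal.ofReal_add (by positivity) (by positivity),
                ENNReal.ofReal_mul hM0, ENNReal.ofReal_mul hδ.le, hGdef]
      rcases le_total a (G x) with h | h
      · rw [min_eq_left h]; exact le_add_right le_rfl
      · rw [min_eq_right h]
        calc a = G x + (a - G x) := (add_tsub_cancel_of_le h).symm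
          _ ≤ G x + ENNReal.ofReal δ * ENNReal.ofReal (|Q (v n x)| * |z x|) := by
              exact add_le_add_right (tsub_le_iff_left.mpr hle) _
    -- dominated convergence for the min part
    have hmin : Tendsto (fun n => ∫⁻ x in Ω,
        min (ENNReal.ofReal (|P (v n x) - vlim x| * |z x|)) (G x) ∂volume) atTop (𝓝 0) := by
      have h0 : (0 : ℝ≥0∞) = ∫⁻ _ in Ω, (0 : ℝ≥0∞) ∂volume := by simp
      rw [h0]
      refine tendsto_lintegral_of_dominated_convergence G (fun n => by fun_prop)
        (fun n => Eventually.of_forall fun x => min_le_right _ _) hGfin ?_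
      filter_upwards [ae_restrict_of_ae hae] with x hx
      have hF : Tendsto (fun n => ENNReal.ofReal (|P (v n x) - vlim x| * |z x|)) atTop
          (𝓝 0) := by
        have h1 : Tendsto (fun n => |P (v n x) - vlim x| * |z x|) atTop (𝓝 0) := by
          have h2 := ((hx.sub_const (vlim x)).abs).mul_const (|z x|)
          simpa using h2
        have h3 := (ENNReal.continuous_ofReal.tendsto 0).comp h1
        simpa [Function.comp_def] using h3
      exact tendsto_of_tendsto_of_tendsto_of_le_of_le tendsto_const_nhds hF
        (fun n => zero_le) (fun n => min_le_left _ _)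
    have heps2 : (0:ℝ≥0∞) < ε / 2 := ENNReal.half_pos hε.ne'
    filter_upwards [(ENNReal.tendsto_nhds_zero.mp hmin) (ε / 2) heps2] with n hn
    calc ∫⁻ x in Ω, ENNReal.ofReal (|P (v n x) - vlim x| * |z x|) ∂volume
        ≤ ∫⁻ x in Ω, (min (ENNReal.ofReal (|P (v n x) - vlim x| * |z x|)) (G x) +
            ENNReal.ofReal δ * ENNReal.ofReal (|Q (v n x)| * |z x|)) ∂volume :=
          lintegral_mono (hdom n)
      _ = (∫⁻ x in Ω, min (ENNReal.ofReal (|P (v n x) - vlim x| * |z x|)) (G x) ∂volume) +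
            ENNReal.ofReal δ * ∫⁻ x in Ω, ENNReal.ofReal (|Q (v n x)| * |z x|) ∂volume := by
          rw [lintegral_add_left (by fun_prop), lintegral_const_mul _ (by fun_prop)]
      _ ≤ ε / 2 + ENNReal.ofReal δ * C :=
          add_le_add hn (mul_le_mul_right (hQle n) _)
      _ ≤ ε / 2 + ε / 2 := add_le_add_right hδC _
      _ = ε := ENNReal.add_halves ε
  -- convert to Bochner integrals
  have heq : ∀ n, ∫ x in Ω, |P (v n x) - vlim x| * |z x| ∂volume =
      (∫⁻ x in Ω, ENNReal.ofReal (|P (v n x) - vlim x| * |z x|) ∂volume).toReal := by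
    intro n
    rw [integral_eq_lintegral_of_nonneg_ae]
    · exact Eventually.of_forall fun x => by positivity
    · exact (Measurable.aestronglyMeasurable (by fun_prop))
  have := (ENNReal.tendsto_toReal (by simp : (0:ℝ≥0∞) ≠ ⊤)).comp L
  simp only [Function.comp, ENNReal.toReal_zero] at this
  refine this.congr fun n => (heq n).symm
end

section
/- Let N ≥ 1 be an integer and let P, Q : ℝ → ℝ be continuous functions such that: for every ε > 0 there exists T > 0 with |P(t)| ≤ ε·|Q(t)| whenever |t| ≥ T, and for every ε > 0 there exists t₀ > 0 with |P(t)| ≤ ε·|Q(t)| whenever 0 < |t| ≤ t₀. Let (v_n)_{n≥1}, v and z be Lebesgue measurable functions from ℝ^N to ℝ such that z is integrable on every bounded Borel set, sup_{n≥1} ∫_{ℝ^N} |Q(v_n(x))·z(x)| dx < +∞, P(v_n(x)) → v(x) for almost every x ∈ ℝ^N as n → +∞, and moreover for every ε > 0 there exists ρ > 0 such that |v_n(x)| ≤ ε for every n ≥ 1 and every x with |x| ≥ ρ. Then ∫_{ℝ^N} |P(v_n(x)) − v(x)|·|z(x)| dx → 0 as n → +∞. -/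
open MeasureTheory Filter Topology ENNReal

private lemma hoff_aux (a b : ℝ) : (‖a‖₊ * ‖b‖₊ : ℝ≥0∞) = ENNReal.ofReal (|a| * |b|) := by
  rw [ENNReal.ofReal_mul (abs_nonneg a), ← Real.enorm_eq_ofReal_abs, ← Real.enorm_eq_ofReal_abs]; rfl

theorem stmt_1 (N : ℕ) (hN : 1 ≤ N) (P Q : ℝ → ℝ)
    (hP : Continuous P) (hQ : Continuous Q)
    (hPQ : ∀ ε > (0:ℝ), ∃ T > (0:ℝ), ∀ t : ℝ, T ≤ |t| → |P t| ≤ ε * |Q t|)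
    (hPQ0 : ∀ ε > (0:ℝ), ∃ t₀ > (0:ℝ), ∀ t : ℝ, 0 < |t| → |t| ≤ t₀ → |P t| ≤ ε * |Q t|)
    (v : ℕ → EuclideanSpace ℝ (Fin N) → ℝ) (vlim z : EuclideanSpace ℝ (Fin N) → ℝ)
    (hv : ∀ n, Measurable (v n)) (hvlim : Measurable vlim) (hz : Measurable z)
    (hzloc : ∀ Ω : Set (EuclideanSpace ℝ (Fin N)), MeasurableSet Ω → Bornology.IsBounded Ω →
      IntegrableOn z Ω volume)
    (hsup : ∃ C : ℝ≥0∞, C < ⊤ ∧ ∀ n, ∫⁻ x, ‖Q (v n x) * z x‖₊ ∂volume ≤ C)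
    (hae : ∀ᵐ x ∂volume, Tendsto (fun n => P (v n x)) atTop (𝓝 (vlim x)))
    (hvan : ∀ ε > (0:ℝ), ∃ ρ > (0:ℝ), ∀ n, ∀ x : EuclideanSpace ℝ (Fin N),
      ρ ≤ ‖x‖ → |v n x| ≤ ε) :
    Tendsto (fun n => ∫ x, |P (v n x) - vlim x| * |z x| ∂volume) atTop (𝓝 0) := by
  obtain ⟨C, hCtop, hC⟩ := hsup
  set C' : ℝ≥0∞ := max C 1 with hC'def
  have hC'top : C' ≠ ⊤ := by
    simp only [hC'def, ne_eq, max_eq_top, not_or]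
    exact ⟨hCtop.ne, one_ne_top⟩
  have hC'0 : C' ≠ 0 := by
    have : (1:ℝ≥0∞) ≤ C' := le_max_right _ _
    exact fun h => by simp [h] at this
  have hC' : ∀ n, ∫⁻ x, ‖Q (v n x) * z x‖₊ ∂volume ≤ C' := fun n => (hC n).trans (le_max_left _ _)
  have hPv : ∀ n, Measurable fun x => P (v n x) := fun n => hP.measurable.comp (hv n)
  have hQv : ∀ n, Measurable fun x => Q (v n x) := fun n => hQ.measurable.comp (hv n)
  -- the main claim, in terms of lintegrals
  have key : Tendsto (fun n => ∫⁻ x, (‖P (v n x) - vlim x‖₊ : ℝ≥0∞) * ‖z x‖₊ ∂volume)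
      atTop (𝓝 0) := by
    rw [ENNReal.tendsto_atTop_zero]
    intro ε' hε'
    set δ : ℝ≥0∞ := min 1 (ε' / (8 * C')) with hδdef
    have h8 : (8:ℝ≥0∞) * C' ≠ 0 := mul_ne_zero (by norm_num) hC'0
    have h8t : (8:ℝ≥0∞) * C' ≠ ⊤ := ENNReal.mul_ne_top (by norm_num) hC'top
    have hδpos : 0 < δ := lt_min one_pos (ENNReal.div_pos hε'.ne' h8t)
    have hδtop : δ ≠ ⊤ := ne_top_of_le_ne_top one_ne_top (min_le_left _ _)
    set ε : ℝ := δ.toReal with hεdef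
    have hεpos : 0 < ε := ENNReal.toReal_pos hδpos.ne' hδtop
    have hδε : ENNReal.ofReal ε = δ := ENNReal.ofReal_toReal hδtop
    obtain ⟨T, hT, hPT⟩ := hPQ ε hεpos
    obtain ⟨t₀, ht₀, hPt₀'⟩ := hPQ0 ε hεpos
    -- extend the smallness near 0 to t = 0 by continuity
    have hPt₀ : ∀ t : ℝ, |t| ≤ t₀ → |P t| ≤ ε * |Q t| := by
      intro t ht
      rcases eq_or_ne t 0 with rfl | hne
      · have h1 : Tendsto (fun t : ℝ => |P t|) (𝓝[≠] (0:ℝ)) (𝓝 |P 0|) :=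
          ((hP.abs).tendsto 0).mono_left nhdsWithin_le_nhds
        have h2 : Tendsto (fun t : ℝ => ε * |Q t|) (𝓝[≠] (0:ℝ)) (𝓝 (ε * |Q 0|)) :=
          ((continuous_const.mul hQ.abs).tendsto 0).mono_left nhdsWithin_le_nhds
        refine le_of_tendsto_of_tendsto h1 h2 ?_
        have hball : ∀ᶠ s : ℝ in 𝓝[≠] (0:ℝ), |s| < t₀ := by
          apply eventually_nhdsWithin_of_eventually_nhds
          filter_upwards [Metric.ball_mem_nhds (0:ℝ) ht₀] with s hs
          simpa [Real.dist_eq] using hs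
        filter_upwards [hball, eventually_mem_nhdsWithin] with s hs hs0
        exact hPt₀' s (abs_pos.2 hs0) hs.le
      · exact hPt₀' t (abs_pos.2 hne) ht
    -- bound for P on [-T, T]
    obtain ⟨M, hM0, hM⟩ : ∃ M : ℝ, 0 ≤ M ∧ ∀ t : ℝ, |t| ≤ T → |P t| ≤ M := by
      obtain ⟨tm, _, hmax⟩ := (isCompact_Icc (a := -T) (b := T)).exists_isMaxOn
        ⟨0, by constructor <;> linarith⟩ (hP.abs.continuousOn)
      exact ⟨|P tm|, abs_nonneg _, fun t ht => hmax (abs_le.1 ht)⟩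
    -- the clamp function
    set c : ℝ → ℝ := fun y => max (-M) (min M y) with hcdef
    have hccont : Continuous c := continuous_const.max (continuous_const.min continuous_id)
    have hceq : ∀ y : ℝ, |y| ≤ M → c y = y := by
      intro y h
      simp only [hcdef]
      rw [min_eq_right (abs_le.1 h).2, max_eq_right (abs_le.1 h).1]
    have hcle : ∀ y : ℝ, |c y| ≤ M := by
      intro y
      rw [abs_le]
      exact ⟨le_max_left _ _, max_le (by linarith) (min_le_left _ _)⟩
    have hcsub : ∀ y : ℝ, |y - c y| ≤ |y| := by
      intro y
      simp only [hcdef]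
      rcases le_total y (-M) with h | h
      · rw [min_eq_right (by linarith), max_eq_left (by linarith)]
        rw [abs_of_nonpos (by linarith), abs_of_nonpos (by linarith)]; linarith
      · rcases le_total y M with h2 | h2
        · rw [min_eq_right h2, max_eq_right h]; simp
        · rw [min_eq_left h2, max_eq_right (by linarith)]
          rw [abs_of_nonneg (by linarith), abs_of_nonneg (by linarith)]; linarith
    have hcPv : ∀ n, Measurable fun x => c (P (v n x)) :=
      fun n => hccont.measurable.comp (hPv n)
    have hcvl : Measurable fun x => c (vlim x) := hccont.measurable.comp hvlim
    have hkey : ∀ t : ℝ, |P t - c (P t)| ≤ ε * |Q t| := by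
      intro t
      rcases le_or_gt (|P t|) M with h | h
      · rw [hceq _ h]; simp; positivity
      · have hTt : T ≤ |t| := by
          by_contra hcon
          push_neg at hcon
          exact absurd (hM t hcon.le) h.not_ge
        exact (hcsub _).trans (hPT t hTt)
    obtain ⟨ρ, hρ, hρv⟩ := hvan t₀ ht₀
    set S : Set (EuclideanSpace ℝ (Fin N)) := Metric.ball 0 ρ with hSdef
    have hS : MeasurableSet S := measurableSet_ball
    have hout : ∀ n x, x ∈ Sᶜ → |P (v n x)| ≤ ε * |Q (v n x)| := by
      intro n x hx
      refine hPt₀ _ (hρv n x ?_)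
      simp only [hSdef, Set.mem_compl_iff, Metric.mem_ball, dist_zero_right, not_lt] at hx
      exact hx
    -- generic pointwise multiplication bound
    have hmulle : ∀ a q b : ℝ, |a| ≤ ε * |q| →
        (‖a‖₊ * ‖b‖₊ : ℝ≥0∞) ≤ δ * ((‖q‖₊ : ℝ≥0∞) * ‖b‖₊) := by
      intro a q b h
      calc (‖a‖₊ * ‖b‖₊ : ℝ≥0∞) = ENNReal.ofReal (|a| * |b|) := hoff_aux a b
        _ ≤ ENNReal.ofReal (ε * (|q| * |b|)) := by
            apply ENNReal.ofReal_le_ofReal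
            rw [← mul_assoc]
            exact mul_le_mul_of_nonneg_right h (abs_nonneg b)
        _ = δ * ((‖q‖₊ : ℝ≥0∞) * ‖b‖₊) := by
            rw [ENNReal.ofReal_mul hεpos.le, hδε, hoff_aux]
    -- abbreviations
    set u1 : ℕ → EuclideanSpace ℝ (Fin N) → ℝ≥0∞ :=
      fun n x => δ * ((‖Q (v n x)‖₊ : ℝ≥0∞) * ‖z x‖₊) with hu1def
    have hmu1 : ∀ n, Measurable (u1 n) :=
      fun n => (measurable_const.mul (((hQv n).nnnorm.coe_nnreal_ennreal).mul hz.nnnorm.coe_nnreal_ennreal))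
    have hu1 : ∀ n, ∫⁻ x, u1 n x ∂volume ≤ δ * C' := by
      intro n
      rw [hu1def]
      simp only
      rw [lintegral_const_mul _ (show Measurable fun x => (‖Q (v n x)‖₊ : ℝ≥0∞) * ‖z x‖₊ from ((hQv n).nnnorm.coe_nnreal_ennreal).mul hz.nnnorm.coe_nnreal_ennreal)]
      refine mul_le_mul_right ?_ δ
      calc ∫⁻ x, (‖Q (v n x)‖₊ : ℝ≥0∞) * ‖z x‖₊ ∂volume
          = ∫⁻ x, (‖Q (v n x) * z x‖₊ : ℝ≥0∞) ∂volume := by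
            apply lintegral_congr; intro x; rw [nnnorm_mul, ENNReal.coe_mul]
        _ ≤ C' := hC' n
    -- Fatou bound for the tail of vlim through the clamp
    have hFatou3 : ∫⁻ x, (‖vlim x - c (vlim x)‖₊ : ℝ≥0∞) * ‖z x‖₊ ∂volume ≤ δ * C' := by
      have hle : ∀ᵐ x ∂volume, (‖vlim x - c (vlim x)‖₊ : ℝ≥0∞) * ‖z x‖₊
          ≤ liminf (fun n => u1 n x) atTop := by
        filter_upwards [hae] with x hx
        have ht : Tendsto (fun n => ((‖P (v n x) - c (P (v n x))‖₊ : ℝ≥0∞) * ‖z x‖₊)) atTop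
            (𝓝 ((‖vlim x - c (vlim x)‖₊ : ℝ≥0∞) * ‖z x‖₊)) := by
          simp only [hoff_aux]
          apply (ENNReal.continuous_ofReal.tendsto _).comp
          have hφ : Continuous (fun y : ℝ => |y - c y| * |z x|) :=
            ((continuous_id.sub hccont).abs).mul continuous_const
          exact (hφ.tendsto (vlim x)).comp hx
        rw [← ht.liminf_eq]
        exact liminf_le_liminf (Eventually.of_forall fun n => hmulle _ _ _ (hkey _))
      calc ∫⁻ x, (‖vlim x - c (vlim x)‖₊ : ℝ≥0∞) * ‖z x‖₊ ∂volume
          ≤ ∫⁻ x, liminf (fun n => u1 n x) atTop ∂volume := lintegral_mono_ae hle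
        _ ≤ liminf (fun n => ∫⁻ x, u1 n x ∂volume) atTop := lintegral_liminf_le hmu1
        _ ≤ liminf (fun _ : ℕ => δ * C') atTop := liminf_le_liminf (Eventually.of_forall hu1)
        _ = δ * C' := liminf_const _
    -- Fatou bound for vlim outside the ball
    have hFatouv : ∫⁻ x in Sᶜ, (‖vlim x‖₊ : ℝ≥0∞) * ‖z x‖₊ ∂volume ≤ δ * C' := by
      rw [← lintegral_indicator hS.compl]
      have hle : ∀ᵐ x ∂volume, Sᶜ.indicator (fun x => (‖vlim x‖₊ : ℝ≥0∞) * ‖z x‖₊) x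
          ≤ liminf (fun n => u1 n x) atTop := by
        filter_upwards [hae] with x hx
        by_cases hxS : x ∈ Sᶜ
        · rw [Set.indicator_of_mem hxS]
          have ht : Tendsto (fun n => ((‖P (v n x)‖₊ : ℝ≥0∞) * ‖z x‖₊)) atTop
              (𝓝 ((‖vlim x‖₊ : ℝ≥0∞) * ‖z x‖₊)) := by
            simp only [hoff_aux]
            apply (ENNReal.continuous_ofReal.tendsto _).comp
            have hφ : Continuous (fun y : ℝ => |y| * |z x|) :=
              continuous_abs.mul continuous_const
            exact (hφ.tendsto (vlim x)).comp hx
          rw [← ht.liminf_eq]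
          exact liminf_le_liminf (Eventually.of_forall fun n => hmulle _ _ _ (hout n x hxS))
        · rw [Set.indicator_of_notMem hxS]; exact zero_le
      calc ∫⁻ x, Sᶜ.indicator (fun x => (‖vlim x‖₊ : ℝ≥0∞) * ‖z x‖₊) x ∂volume
          ≤ ∫⁻ x, liminf (fun n => u1 n x) atTop ∂volume := lintegral_mono_ae hle
        _ ≤ liminf (fun n => ∫⁻ x, u1 n x ∂volume) atTop := lintegral_liminf_le hmu1
        _ ≤ liminf (fun _ : ℕ => δ * C') atTop := liminf_le_liminf (Eventually.of_forall hu1)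
        _ = δ * C' := liminf_const _
    -- the outside bound
    have houtbd : ∀ n, ∫⁻ x in Sᶜ, (‖P (v n x) - vlim x‖₊ : ℝ≥0∞) * ‖z x‖₊ ∂volume
        ≤ δ * C' + δ * C' := by
      intro n
      calc ∫⁻ x in Sᶜ, (‖P (v n x) - vlim x‖₊ : ℝ≥0∞) * ‖z x‖₊ ∂volume
          ≤ ∫⁻ x in Sᶜ, ((‖P (v n x)‖₊ : ℝ≥0∞) * ‖z x‖₊ + (‖vlim x‖₊ : ℝ≥0∞) * ‖z x‖₊) ∂volume := by
            apply lintegral_mono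
            intro x
            dsimp only
            rw [← add_mul]
            refine mul_le_mul_left ?_ _
            rw [← ENNReal.coe_add]
            exact ENNReal.coe_le_coe.2 (nnnorm_sub_le _ _)
        _ = ∫⁻ x in Sᶜ, (‖P (v n x)‖₊ : ℝ≥0∞) * ‖z x‖₊ ∂volume
            + ∫⁻ x in Sᶜ, (‖vlim x‖₊ : ℝ≥0∞) * ‖z x‖₊ ∂volume :=
            lintegral_add_left (((hPv n).nnnorm.coe_nnreal_ennreal).mul hz.nnnorm.coe_nnreal_ennreal) _
        _ ≤ δ * C' + δ * C' := by
            refine add_le_add ?_ hFatouv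
            calc ∫⁻ x in Sᶜ, (‖P (v n x)‖₊ : ℝ≥0∞) * ‖z x‖₊ ∂volume
                ≤ ∫⁻ x in Sᶜ, u1 n x ∂volume :=
                  setLIntegral_mono (hmu1 n) (fun x hx => hmulle _ _ _ (hout n x hx))
              _ ≤ ∫⁻ x, u1 n x ∂volume := setLIntegral_le_lintegral _ _
              _ ≤ δ * C' := hu1 n
    -- the inside bound
    have hin : ∀ n, ∫⁻ x in S, (‖P (v n x) - vlim x‖₊ : ℝ≥0∞) * ‖z x‖₊ ∂volume
        ≤ δ * C' + ∫⁻ x in S, (‖c (P (v n x)) - c (vlim x)‖₊ : ℝ≥0∞) * ‖z x‖₊ ∂volume + δ * C' := by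
      intro n
      have hmu2 : Measurable (fun x => (‖c (P (v n x)) - c (vlim x)‖₊ : ℝ≥0∞) * ‖z x‖₊) :=
        ((((hcPv n).sub hcvl).nnnorm.coe_nnreal_ennreal).mul hz.nnnorm.coe_nnreal_ennreal)
      calc ∫⁻ x in S, (‖P (v n x) - vlim x‖₊ : ℝ≥0∞) * ‖z x‖₊ ∂volume
          ≤ ∫⁻ x in S, (u1 n x + (‖c (P (v n x)) - c (vlim x)‖₊ : ℝ≥0∞) * ‖z x‖₊
              + (‖vlim x - c (vlim x)‖₊ : ℝ≥0∞) * ‖z x‖₊) ∂volume := by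
            apply lintegral_mono
            intro x
            have tri : |P (v n x) - vlim x| ≤ |P (v n x) - c (P (v n x))|
                + |c (P (v n x)) - c (vlim x)| + |vlim x - c (vlim x)| := by
              have h3 := abs_add_three (P (v n x) - c (P (v n x)))
                (c (P (v n x)) - c (vlim x)) (c (vlim x) - vlim x)
              rw [abs_sub_comm (c (vlim x)) (vlim x)] at h3
              calc |P (v n x) - vlim x|
                  = |(P (v n x) - c (P (v n x))) + (c (P (v n x)) - c (vlim x))
                    + (c (vlim x) - vlim x)| := by ring_nf
                _ ≤ _ := h3
            calc (‖P (v n x) - vlim x‖₊ : ℝ≥0∞) * ‖z x‖₊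
                = ENNReal.ofReal (|P (v n x) - vlim x| * |z x|) := hoff_aux _ _
              _ ≤ ENNReal.ofReal ((|P (v n x) - c (P (v n x))|
                  + |c (P (v n x)) - c (vlim x)| + |vlim x - c (vlim x)|) * |z x|) :=
                  ENNReal.ofReal_le_ofReal (mul_le_mul_of_nonneg_right tri (abs_nonneg _))
              _ = ENNReal.ofReal (|P (v n x) - c (P (v n x))| * |z x|)
                  + ENNReal.ofReal (|c (P (v n x)) - c (vlim x)| * |z x|)
                  + ENNReal.ofReal (|vlim x - c (vlim x)| * |z x|) := by
                  rw [add_mul, add_mul, ENNReal.ofReal_add (by positivity) (by positivity),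
                    ENNReal.ofReal_add (by positivity) (by positivity)]
              _ ≤ u1 n x + (‖c (P (v n x)) - c (vlim x)‖₊ : ℝ≥0∞) * ‖z x‖₊
                  + (‖vlim x - c (vlim x)‖₊ : ℝ≥0∞) * ‖z x‖₊ := by
                  refine add_le_add (add_le_add ?_ (le_of_eq (hoff_aux _ _).symm))
                    (le_of_eq (hoff_aux _ _).symm)
                  rw [← hoff_aux]
                  exact hmulle _ _ _ (hkey _)
        _ = ∫⁻ x in S, (u1 n x + (‖c (P (v n x)) - c (vlim x)‖₊ : ℝ≥0∞) * ‖z x‖₊) ∂volume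
            + ∫⁻ x in S, (‖vlim x - c (vlim x)‖₊ : ℝ≥0∞) * ‖z x‖₊ ∂volume := by
            exact lintegral_add_left ((hmu1 n).add hmu2) _
        _ = ∫⁻ x in S, u1 n x ∂volume
            + ∫⁻ x in S, (‖c (P (v n x)) - c (vlim x)‖₊ : ℝ≥0∞) * ‖z x‖₊ ∂volume
            + ∫⁻ x in S, (‖vlim x - c (vlim x)‖₊ : ℝ≥0∞) * ‖z x‖₊ ∂volume := by
            rw [lintegral_add_left (hmu1 n)]
        _ ≤ δ * C' + ∫⁻ x in S, (‖c (P (v n x)) - c (vlim x)‖₊ : ℝ≥0∞) * ‖z x‖₊ ∂volume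
            + δ * C' := by
            refine add_le_add (add_le_add ?_ le_rfl) ?_
            · exact (setLIntegral_le_lintegral _ _).trans (hu1 n)
            · exact (setLIntegral_le_lintegral _ _).trans hFatou3
    -- dominated convergence for the clamped part on the ball
    have hDCT : Tendsto (fun n => ∫⁻ x in S,
        (‖c (P (v n x)) - c (vlim x)‖₊ : ℝ≥0∞) * ‖z x‖₊ ∂volume) atTop (𝓝 0) := by
      have hfin : ∫⁻ x in S, ENNReal.ofReal (2 * M) * (‖z x‖₊ : ℝ≥0∞) ∂volume ≠ ⊤ := by
        rw [lintegral_const_mul _ hz.nnnorm.coe_nnreal_ennreal]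
        exact ENNReal.mul_ne_top ofReal_ne_top (hzloc S hS Metric.isBounded_ball).2.ne
      have h0 : (0:ℝ≥0∞) = ∫⁻ x in S, (fun _ => (0:ℝ≥0∞)) x ∂volume := by simp
      rw [show (𝓝 (0:ℝ≥0∞)) = 𝓝 (∫⁻ x in S, (fun _ => (0:ℝ≥0∞)) x ∂volume) by rw [← h0]]
      apply tendsto_lintegral_of_dominated_convergence
        (fun x => ENNReal.ofReal (2 * M) * (‖z x‖₊ : ℝ≥0∞))
      · intro n
        exact ((((hcPv n).sub hcvl).nnnorm.coe_nnreal_ennreal).mul hz.nnnorm.coe_nnreal_ennreal)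
      · intro n
        apply Eventually.of_forall
        intro x
        calc (‖c (P (v n x)) - c (vlim x)‖₊ : ℝ≥0∞) * ‖z x‖₊
            = ENNReal.ofReal (|c (P (v n x)) - c (vlim x)| * |z x|) := hoff_aux _ _
          _ ≤ ENNReal.ofReal ((2 * M) * |z x|) := by
              apply ENNReal.ofReal_le_ofReal
              refine mul_le_mul_of_nonneg_right ?_ (abs_nonneg _)
              calc |c (P (v n x)) - c (vlim x)| ≤ |c (P (v n x))| + |c (vlim x)| :=
                  abs_sub _ _
                _ ≤ 2 * M := by
                    have := hcle (P (v n x)); have := hcle (vlim x); linarith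
          _ = ENNReal.ofReal (2 * M) * (‖z x‖₊ : ℝ≥0∞) := by
              rw [ENNReal.ofReal_mul (by linarith), ← Real.enorm_eq_ofReal_abs]; rfl
      · exact hfin
      · apply ae_restrict_of_ae
        filter_upwards [hae] with x hx
        have hφ : Continuous (fun y : ℝ => |c y - c (vlim x)| * |z x|) :=
          (((hccont.sub continuous_const).abs).mul continuous_const)
        have ht : Tendsto (fun n => |c (P (v n x)) - c (vlim x)| * |z x|) atTop
            (𝓝 (|c (vlim x) - c (vlim x)| * |z x|)) := (hφ.tendsto (vlim x)).comp hx
        simp only [sub_self, abs_zero, zero_mul] at ht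
        have := (ENNReal.continuous_ofReal.tendsto 0).comp ht
        simp only [ENNReal.ofReal_zero] at this
        convert this using 2 with n
        exact hoff_aux _ _
    -- conclude
    have hδC'pos : (0:ℝ≥0∞) < δ * C' := ENNReal.mul_pos hδpos.ne' hC'0
    rw [ENNReal.tendsto_atTop_zero] at hDCT
    obtain ⟨n₀, hn₀⟩ := hDCT (δ * C') hδC'pos
    refine ⟨n₀, fun n hn => ?_⟩
    calc ∫⁻ x, (‖P (v n x) - vlim x‖₊ : ℝ≥0∞) * ‖z x‖₊ ∂volume
        = ∫⁻ x in S, (‖P (v n x) - vlim x‖₊ : ℝ≥0∞) * ‖z x‖₊ ∂volume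
          + ∫⁻ x in Sᶜ, (‖P (v n x) - vlim x‖₊ : ℝ≥0∞) * ‖z x‖₊ ∂volume :=
          (lintegral_add_compl _ hS).symm
      _ ≤ (δ * C' + ∫⁻ x in S, (‖c (P (v n x)) - c (vlim x)‖₊ : ℝ≥0∞) * ‖z x‖₊ ∂volume + δ * C')
          + (δ * C' + δ * C') := add_le_add (hin n) (houtbd n)
      _ ≤ (δ * C' + δ * C' + δ * C') + (δ * C' + δ * C') := by
          refine add_le_add (add_le_add (add_le_add le_rfl (hn₀ n hn)) le_rfl) le_rfl
      _ = 5 * (δ * C') := by ring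
      _ ≤ 8 * (δ * C') := mul_le_mul_left (by norm_num) _
      _ ≤ 8 * ((ε' / (8 * C')) * C') := by
          refine mul_le_mul_right (mul_le_mul_left (min_le_right _ _) _) _
      _ = ε' / (8 * C') * (8 * C') := by ring
      _ = ε' := ENNReal.div_mul_cancel h8 h8t
  -- convert to the real integral
  have heq : ∀ n, ∫ x, |P (v n x) - vlim x| * |z x| ∂volume
      = (∫⁻ x, (‖P (v n x) - vlim x‖₊ : ℝ≥0∞) * ‖z x‖₊ ∂volume).toReal := by
    intro n
    have hmm : AEStronglyMeasurable (fun x => |P (v n x) - vlim x| * |z x|) volume :=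
      ((((hP.measurable.comp (hv n)).sub hvlim).abs.mul hz.abs).aestronglyMeasurable)
    rw [integral_eq_lintegral_of_nonneg_ae (Eventually.of_forall fun x => by positivity) hmm]
    congr 1
    apply lintegral_congr
    intro x
    exact (hoff_aux _ _).symm
  have h2 : Tendsto (fun n => (∫⁻ x, (‖P (v n x) - vlim x‖₊ : ℝ≥0∞) * ‖z x‖₊ ∂volume).toReal)
      atTop (𝓝 ((0:ℝ≥0∞).toReal)) := (ENNReal.tendsto_toReal (by simp)).comp key
  simp only [ENNReal.toReal_zero] at h2
  simpa only [heq] using h2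
end

section
/- Let f : ℝ → ℝ be continuous and odd. Set ν := −(1/2)·limsup_{t→0} f(t)/t and assume 0 < ν < +∞. Assume moreover that for every α > 0, f(t)/e^{αt²} → 0 as t → +∞. Then for every α > 0 there exists a constant C_α > 0 such that f(t) ≤ −ν·t + C_α·t⁷·e^{αt²} for all t ≥ 0, and consequently F(t) ≤ −(ν/2)·t² + (C_α/(2α))·t⁶·(e^{αt²} − 1) for all t ∈ ℝ. -/
open Filter Topology

set_option maxHeartbeats 1000000 in
theorem stmt_4 (f : ℝ → ℝ) (hf : Continuous f)
    (hodd : ∀ t, f (-t) = -f t) (ν : ℝ)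
    (hν : ν = -(1/2) * Filter.limsup (fun t => f t / t) (𝓝[≠] (0:ℝ)))
    (hνpos : 0 < ν)
    (hgrow : ∀ α > (0:ℝ), Tendsto (fun t : ℝ => f t / Real.exp (α * t^2)) atTop (𝓝 0)) :
    ∀ α > (0:ℝ), ∃ C > (0:ℝ),
      (∀ t : ℝ, 0 ≤ t → f t ≤ -ν * t + C * t^7 * Real.exp (α * t^2)) ∧
      ∀ t : ℝ, (∫ τ in (0:ℝ)..t, f τ) ≤
        -(ν/2) * t^2 + (C/(2*α)) * t^6 * (Real.exp (α * t^2) - 1) := by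
  intro α hα
  have hf0 : f 0 = 0 := by have := hodd 0; simp at this; linarith
  -- Step 1: extract a < -ν with eventual bound near 0
  obtain ⟨a, haν, hev⟩ : ∃ a < -ν, ∀ᶠ t in 𝓝[≠] (0:ℝ), f t / t ≤ a := by
    set S := {b : ℝ | ∀ᶠ t in 𝓝[≠] (0:ℝ), f t / t ≤ b} with hSdef
    have hls : Filter.limsup (fun t => f t / t) (𝓝[≠] (0:ℝ)) = sInf S :=
      Filter.limsup_eq
    have hval : sInf S = -2*ν := by rw [← hls]; linarith
    rcases S.eq_empty_or_nonempty with h | ⟨b, hb⟩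
    · exfalso; rw [h, Real.sInf_empty] at hval; linarith
    · by_contra hcon
      push_neg at hcon
      have hlb : ∀ c ∈ S, -ν ≤ c := by
        intro c hc
        by_contra hcc
        push_neg at hcc
        exact hcon c hcc ((show ∀ᶠ t in 𝓝[≠] (0:ℝ), f t / t ≤ c from hc).mono fun x hx => not_lt.mpr hx)
      have := le_csInf ⟨b, hb⟩ hlb
      rw [hval] at this
      linarith
  rw [eventually_nhdsWithin_iff, Metric.eventually_nhds_iff] at hev
  obtain ⟨δ, hδ, hball⟩ := hev
  -- Step 2: growth at infinity
  have hgt := (hgrow α hα).eventually_lt_const one_pos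
  rw [eventually_atTop] at hgt
  obtain ⟨T₀, hT₀⟩ := hgt
  set d : ℝ := δ/2 with hd
  have hdpos : 0 < d := by positivity
  set T : ℝ := max T₀ (max d 1) with hT
  have hdT : d ≤ T := le_trans (le_max_left d 1) (le_max_right _ _)
  have hT1 : (1:ℝ) ≤ T := le_trans (le_max_right d 1) (le_max_right _ _)
  have hTT₀ : T₀ ≤ T := le_max_left _ _
  -- Step 3: bound on the compact [d, T]
  obtain ⟨M, hM⟩ : ∃ M, ∀ t ∈ Set.Icc d T, f t + ν * t ≤ M := by
    obtain ⟨x, -, hx⟩ := (isCompact_Icc (a := d) (b := T)).exists_isMaxOn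
      ⟨d, le_refl d, hdT⟩ ((hf.add (continuous_const.mul continuous_id)).continuousOn)
    exact ⟨f x + ν * x, fun t htt => hx htt⟩
  set M' : ℝ := max M 0 with hM'
  set C : ℝ := max ((M' + 1) / d^7) (ν + 1) with hC
  have hCpos : 0 < C := lt_of_lt_of_le (by linarith) (le_max_right _ _)
  have hpoint : ∀ t : ℝ, 0 ≤ t → f t ≤ -ν * t + C * t^7 * Real.exp (α * t^2) := by
    intro t ht
    have hexp1 : (1:ℝ) ≤ Real.exp (α * t^2) := Real.one_le_exp (by positivity)
    have hexppos : (0:ℝ) < Real.exp (α * t^2) := Real.exp_pos _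
    rcases eq_or_lt_of_le ht with rfl | htpos
    · simp [hf0]
    rcases lt_or_ge t d with hlt | hge
    · -- 0 < t < d : use limsup bound
      have htδ : dist t 0 < δ := by
        rw [Real.dist_eq, sub_zero, abs_of_pos htpos]; linarith
      have hfa : f t / t ≤ a := hball htδ (ne_of_gt htpos)
      have : f t ≤ a * t := by
        rw [div_le_iff₀ htpos] at hfa; linarith
      have h1 : a * t ≤ -ν * t := by nlinarith
      have h2 : 0 ≤ C * t^7 * Real.exp (α * t^2) := by positivity
      linarith
    rcases le_or_gt t T with hle | hgtT
    · -- d ≤ t ≤ T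
      have hMt : f t + ν * t ≤ M' := le_trans (hM t ⟨hge, hle⟩) (le_max_left _ _)
      have hCd : (M' + 1) / d^7 ≤ C := le_max_left _ _
      have hd7 : d^7 ≤ t^7 := pow_le_pow_left₀ (le_of_lt hdpos) hge 7
      have h1 : M' + 1 ≤ C * d^7 := by
        rw [div_le_iff₀ (by positivity)] at hCd; linarith
      have h2 : C * d^7 ≤ C * t^7 := by nlinarith
      have h3 : C * t^7 ≤ C * t^7 * Real.exp (α * t^2) := by nlinarith [mul_pos hCpos (pow_pos htpos 7)]
      linarith
    · -- t > T
      have ht1 : (1:ℝ) ≤ t := le_trans hT1 (le_of_lt hgtT)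
      have hft : f t < Real.exp (α * t^2) := by
        have := hT₀ t (le_trans hTT₀ (le_of_lt hgtT))
        rw [div_lt_one hexppos] at this
        exact this
      have ht7 : (1:ℝ) ≤ t^7 := one_le_pow₀ ht1
      have hCν : ν + 1 ≤ C := le_max_right _ _
      have htt7 : t ≤ t^7 := by
        calc t = t^1 := (pow_one t).symm
        _ ≤ t^7 := pow_le_pow_right₀ ht1 (by norm_num)
      have h1 : ν * t ≤ ν * t^7 :=
        mul_le_mul_of_nonneg_left htt7 hνpos.le
      have h2 : ν * t^7 ≤ ν * t^7 * Real.exp (α * t^2) := by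
        nlinarith [mul_nonneg (mul_nonneg hνpos.le (pow_nonneg ht 7)) (sub_nonneg.mpr hexp1)]
      have h3 : Real.exp (α * t^2) ≤ t^7 * Real.exp (α * t^2) := by
        nlinarith [mul_nonneg (sub_nonneg.mpr ht7) hexppos.le]
      have h4 : (ν + 1) * (t^7 * Real.exp (α * t^2)) ≤ C * (t^7 * Real.exp (α * t^2)) := by
        have hp : (0:ℝ) ≤ t^7 * Real.exp (α * t^2) := by positivity
        nlinarith
      have h5 : (ν + 1) * (t^7 * Real.exp (α * t^2))
          = ν * t^7 * Real.exp (α * t^2) + t^7 * Real.exp (α * t^2) := by ring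
      have h6 : C * (t^7 * Real.exp (α * t^2)) = C * t^7 * Real.exp (α * t^2) := by ring
      linarith
  refine ⟨C, hCpos, hpoint, ?_⟩
  · intro t
    have hbound := hpoint
    have key : ∀ s : ℝ, 0 ≤ s → (∫ τ in (0:ℝ)..s, f τ) ≤
        -(ν/2) * s^2 + (C/(2*α)) * s^6 * (Real.exp (α * s^2) - 1) := by
      intro s hs
      have hint_f : IntervalIntegrable f MeasureTheory.volume 0 s := hf.intervalIntegrable 0 s
      have hcont_g : Continuous (fun τ : ℝ => -ν * τ + C * τ^7 * Real.exp (α * τ^2)) := by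
        fun_prop
      have hint_g : IntervalIntegrable _ MeasureTheory.volume 0 s := hcont_g.intervalIntegrable 0 s
      have step1 : (∫ τ in (0:ℝ)..s, f τ)
          ≤ ∫ τ in (0:ℝ)..s, (-ν * τ + C * τ^7 * Real.exp (α * τ^2)) :=
        intervalIntegral.integral_mono_on hs hint_f hint_g (fun x hx => hbound x hx.1)
      have hcont_h : Continuous (fun τ : ℝ => -ν * τ + C * s^6 * (τ * Real.exp (α * τ^2))) := by
        fun_prop
      have step2 : (∫ τ in (0:ℝ)..s, (-ν * τ + C * τ^7 * Real.exp (α * τ^2)))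
          ≤ ∫ τ in (0:ℝ)..s, (-ν * τ + C * s^6 * (τ * Real.exp (α * τ^2))) := by
        apply intervalIntegral.integral_mono_on hs hint_g (hcont_h.intervalIntegrable (μ := MeasureTheory.volume) 0 s)
        intro x hx
        have hx0 : 0 ≤ x := hx.1
        have hxs : x ≤ s := hx.2
        have hx6 : x^6 ≤ s^6 := pow_le_pow_left₀ hx0 hxs 6
        have hx7 : x^7 ≤ s^6 * x := by nlinarith
        have hep : (0:ℝ) ≤ Real.exp (α*x^2) := (Real.exp_pos _).le
        nlinarith [mul_le_mul_of_nonneg_right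
          (mul_le_mul_of_nonneg_left hx7 hCpos.le) hep]
      have hderiv : ∀ x ∈ Set.uIcc (0:ℝ) s,
          HasDerivAt (fun y => Real.exp (α*y^2)/(2*α)) (x * Real.exp (α*x^2)) x := by
        intro x _
        have h1 : HasDerivAt (fun y : ℝ => α * y^2) (α * (2*x)) x := by
          simpa using (hasDerivAt_pow 2 x).const_mul α
        have h2 := (h1.exp).div_const (2*α)
        refine h2.congr_deriv ?_
        rw [div_eq_iff (by positivity)]
        ring
      have hIc : Continuous (fun τ : ℝ => τ * Real.exp (α * τ^2)) := by fun_prop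
      have hI : (∫ τ in (0:ℝ)..s, τ * Real.exp (α * τ^2))
          = (Real.exp (α*s^2) - 1)/(2*α) := by
        rw [intervalIntegral.integral_eq_sub_of_hasDerivAt hderiv (hIc.intervalIntegrable (μ := MeasureTheory.volume) 0 s)]
        norm_num
        ring
      have hsplit : (∫ τ in (0:ℝ)..s, (-ν * τ + C * s^6 * (τ * Real.exp (α * τ^2))))
          = (∫ τ in (0:ℝ)..s, -ν * τ)
            + (C * s^6) * ∫ τ in (0:ℝ)..s, τ * Real.exp (α * τ^2) := by
        have hi1 : IntervalIntegrable (fun τ : ℝ => -ν * τ) MeasureTheory.volume 0 s :=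
          (continuous_const.mul continuous_id).intervalIntegrable 0 s
        have hi2 : IntervalIntegrable (fun τ : ℝ => C * s^6 * (τ * Real.exp (α * τ^2)))
            MeasureTheory.volume 0 s :=
          (continuous_const.mul hIc).intervalIntegrable 0 s
        rw [intervalIntegral.integral_add hi1 hi2, intervalIntegral.integral_const_mul,
          intervalIntegral.integral_const_mul]
      have hlin : (∫ τ in (0:ℝ)..s, -ν * τ) = -ν * (s^2/2) := by
        rw [intervalIntegral.integral_const_mul, integral_id]
        ring
      rw [hsplit, hlin, hI] at step2
      have hring : -ν * (s^2/2) + (C * s^6) * ((Real.exp (α*s^2) - 1)/(2*α))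
          = -(ν/2) * s^2 + (C/(2*α)) * s^6 * (Real.exp (α * s^2) - 1) := by
        ring
      linarith
    rcases le_total 0 t with h | h
    · exact key t h
    · have h1 : (∫ x in (0:ℝ)..(-t), f (-x)) = ∫ x in (t:ℝ)..0, f x := by
        simpa using intervalIntegral.integral_comp_neg (a := (0:ℝ)) (b := -t) f
      simp only [hodd] at h1
      rw [intervalIntegral.integral_neg] at h1
      have e1 : (∫ x in (t:ℝ)..0, f x) = -∫ x in (0:ℝ)..t, f x :=
        intervalIntegral.integral_symm 0 t
      have e2 : (∫ x in (-t:ℝ)..0, f x) = -∫ x in (0:ℝ)..(-t), f x :=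
        intervalIntegral.integral_symm 0 (-t)
      have heq : (∫ τ in (0:ℝ)..t, f τ) = ∫ τ in (0:ℝ)..(-t), f τ := by
        linarith
      have h2 := key (-t) (by linarith)
      rw [show ((-t):ℝ)^2 = t^2 by ring, show ((-t):ℝ)^6 = t^6 by ring] at h2
      rw [heq]
      exact h2
end

section
/- Let f : ℝ → ℝ be continuous and odd with −∞ < liminf_{t→0} f(t)/t and limsup_{t→0} f(t)/t < 0, and set ν := −(1/2)·limsup_{t→0} f(t)/t ∈ (0, +∞). Define f₁(t) := max{f(t) + 2νt, 0} for t ≥ 0 and f₁(t) := min{f(t) + 2νt, 0} for t < 0, and define f₂ := f₁ − f. Then: f₁ and f₂ are continuous and odd on ℝ; lim_{t→0} f₁(t)/t = 0; f₂(t)·t ≥ 2ν·t² for all t ∈ ℝ; and 2ν = liminf_{t→0} f₂(t)/t ≤ limsup_{t→0} f₂(t)/t < +∞. -/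
open Filter Topology

theorem stmt_11 (f : ℝ → ℝ) (hf : Continuous f) (hodd : ∀ t, f (-t) = -f t)
    (hbdd_below : Filter.IsBoundedUnder (· ≥ ·) (𝓝[≠] (0:ℝ)) (fun t => f t / t))
    (hbdd_above : Filter.IsBoundedUnder (· ≤ ·) (𝓝[≠] (0:ℝ)) (fun t => f t / t))
    (hlimsup : Filter.limsup (fun t => f t / t) (𝓝[≠] (0:ℝ)) < 0)
    (ν : ℝ) (hν : ν = -(1/2) * Filter.limsup (fun t => f t / t) (𝓝[≠] (0:ℝ)))
    (f₁ f₂ : ℝ → ℝ)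
    (hf₁ : ∀ t, f₁ t = if 0 ≤ t then max (f t + 2*ν*t) 0 else min (f t + 2*ν*t) 0)
    (hf₂ : ∀ t, f₂ t = f₁ t - f t) :
    0 < ν ∧
    Continuous f₁ ∧ (∀ t, f₁ (-t) = -f₁ t) ∧
    Continuous f₂ ∧ (∀ t, f₂ (-t) = -f₂ t) ∧
    Tendsto (fun t => f₁ t / t) (𝓝[≠] (0:ℝ)) (𝓝 0) ∧
    (∀ t : ℝ, 2*ν*t^2 ≤ f₂ t * t) ∧
    Filter.liminf (fun t => f₂ t / t) (𝓝[≠] (0:ℝ)) = 2*ν ∧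
    Filter.liminf (fun t => f₂ t / t) (𝓝[≠] (0:ℝ)) ≤
      Filter.limsup (fun t => f₂ t / t) (𝓝[≠] (0:ℝ)) ∧
    Filter.IsBoundedUnder (· ≤ ·) (𝓝[≠] (0:ℝ)) (fun t => f₂ t / t) := by
  set L := Filter.limsup (fun t => f t / t) (𝓝[≠] (0:ℝ)) with hL
  have hν0 : 0 < ν := by rw [hν]; linarith
  have hL2 : L = -(2*ν) := by rw [hν]; ring
  have hf0 : f 0 = 0 := by have := hodd 0; simp at this; linarith
  set g : ℝ → ℝ := fun t => f t + 2*ν*t with hg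
  have hgc : Continuous g := by continuity
  have hg0 : g 0 = 0 := by simp [hg, hf0]
  -- continuity of f₁
  have hcont1 : Continuous f₁ := by
    rw [continuous_iff_continuousAt]
    intro x
    rcases lt_trichotomy x 0 with hx | hx | hx
    · have heq : f₁ =ᶠ[𝓝 x] fun t => min (g t) 0 := by
        filter_upwards [eventually_lt_nhds hx] with t ht
        rw [hf₁ t, if_neg (not_le.mpr ht)]
      exact ContinuousAt.congr ((hgc.min continuous_const).continuousAt) heq.symm
    · subst hx
      have h10 : f₁ 0 = 0 := by simp [hf₁ 0, hf0]
      rw [ContinuousAt, h10]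
      have hbound : ∀ t, ‖f₁ t‖ ≤ ‖g t‖ := by
        intro t
        rw [hf₁ t, Real.norm_eq_abs, Real.norm_eq_abs]
        split_ifs
        · rw [abs_of_nonneg (le_max_right _ _)]
          exact max_le (le_abs_self _) (abs_nonneg _)
        · rw [abs_of_nonpos (min_le_right _ _)]
          rw [neg_le]
          exact le_min (neg_abs_le _) (by simp [abs_nonneg])
      have hgt : Tendsto (fun t => ‖g t‖) (𝓝 0) (𝓝 0) := by
        have := hgc.tendsto 0
        rw [hg0] at this
        simpa using this.norm
      exact squeeze_zero_norm hbound hgt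
    · have heq : f₁ =ᶠ[𝓝 x] fun t => max (g t) 0 := by
        filter_upwards [eventually_gt_nhds hx] with t ht
        rw [hf₁ t, if_pos ht.le]
      exact ContinuousAt.congr ((hgc.max continuous_const).continuousAt) heq.symm
  -- oddness of f₁
  have hodd1 : ∀ t, f₁ (-t) = -f₁ t := by
    intro t
    have hgneg : f (-t) + 2*ν*(-t) = -(f t + 2*ν*t) := by rw [hodd]; ring
    rcases lt_trichotomy t 0 with ht | ht | ht
    · rw [hf₁ (-t), hf₁ t, if_pos (by linarith), if_neg (not_le.mpr ht), hgneg,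
        ← neg_zero, max_neg_neg, neg_zero]
    · subst ht; simp [hf₁ 0, hf0]
    · rw [hf₁ (-t), hf₁ t, if_neg (by simp; linarith), if_pos ht.le, hgneg,
        ← neg_zero, min_neg_neg, neg_zero]
  have hcont2 : Continuous f₂ := by
    have : f₂ = fun t => f₁ t - f t := funext hf₂
    rw [this]; exact hcont1.sub hf
  have hodd2 : ∀ t, f₂ (-t) = -f₂ t := by
    intro t; rw [hf₂, hf₂, hodd1, hodd]; ring
  -- key identity for f₁ t / t
  have hkey : ∀ t : ℝ, t ≠ 0 → f₁ t / t = max (f t / t + 2*ν) 0 := by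
    intro t ht
    have hdiv : g t / t = f t / t + 2*ν := by
      field_simp [hg]
      simp only [hg]; ring
    rcases lt_or_gt_of_ne ht with ht' | ht'
    · rw [hf₁ t, if_neg (not_le.mpr ht'), show f t + 2*ν*t = g t from rfl, ← hdiv]
      rcases le_total (g t) 0 with h | h
      · rw [min_eq_left h, max_eq_left (div_nonneg_of_nonpos h ht'.le)]
      · rw [min_eq_right h, max_eq_right (div_nonpos_of_nonneg_of_nonpos h ht'.le), zero_div]
    · rw [hf₁ t, if_pos ht'.le, show f t + 2*ν*t = g t from rfl, ← hdiv]
      rcases le_total (g t) 0 with h | h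
      · rw [max_eq_right h, max_eq_right (div_nonpos_of_nonpos_of_nonneg h ht'.le), zero_div]
      · rw [max_eq_left h, max_eq_left (div_nonneg h ht'.le)]
  -- tendsto f₁ / t → 0
  have htend : Tendsto (fun t => f₁ t / t) (𝓝[≠] (0:ℝ)) (𝓝 0) := by
    rw [Metric.tendsto_nhds]
    intro ε hε
    have hlt : ∀ᶠ t in 𝓝[≠] (0:ℝ), f t / t < L + ε :=
      eventually_lt_of_limsup_lt (by linarith) hbdd_above
    filter_upwards [hlt, self_mem_nhdsWithin] with t ht ht0
    rw [Set.mem_compl_iff, Set.mem_singleton_iff] at ht0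
    rw [hkey t ht0, Real.dist_eq, sub_zero, abs_of_nonneg (le_max_right _ _)]
    rw [hL2] at ht
    exact max_lt (by linarith) hε
  -- inequality f₂ t * t ≥ 2ν t²
  have hineq : ∀ t : ℝ, 2*ν*t^2 ≤ f₂ t * t := by
    intro t
    rw [hf₂ t]
    rcases le_or_gt 0 t with ht | ht
    · rw [hf₁ t]; rw [if_pos ht]
      have h1 : (f t + 2*ν*t) * t ≤ max (f t + 2*ν*t) 0 * t :=
        mul_le_mul_of_nonneg_right (le_max_left _ _) ht
      nlinarith
    · rw [hf₁ t]; rw [if_neg (not_le.mpr ht)]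
      have h1 : (f t + 2*ν*t) * t ≤ min (f t + 2*ν*t) 0 * t :=
        mul_le_mul_of_nonpos_right (min_le_left _ _) ht.le
      nlinarith
  -- identity for f₂ t / t
  have hkey2 : ∀ t : ℝ, t ≠ 0 → f₂ t / t = max (f t / t + 2*ν) 0 - f t / t := by
    intro t ht
    rw [hf₂ t, sub_div, hkey t ht]
  -- eventual lower bound
  have hge : ∀ᶠ t in 𝓝[≠] (0:ℝ), 2*ν ≤ f₂ t / t := by
    filter_upwards [self_mem_nhdsWithin] with t ht0
    rw [Set.mem_compl_iff, Set.mem_singleton_iff] at ht0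
    rw [hkey2 t ht0]
    rcases le_total (f t / t + 2*ν) 0 with h | h
    · rw [max_eq_right h]; linarith
    · rw [max_eq_left h]; linarith
  -- eventual upper bound
  obtain ⟨b, hb⟩ := id hbdd_below
  rw [eventually_map] at hb
  have hub : ∀ᶠ t in 𝓝[≠] (0:ℝ), f₂ t / t ≤ max (2*ν) (-b) := by
    filter_upwards [hb, self_mem_nhdsWithin] with t hbt ht0
    rw [Set.mem_compl_iff, Set.mem_singleton_iff] at ht0
    simp only [ge_iff_le] at hbt
    rw [hkey2 t ht0]
    rcases le_total (f t / t + 2*ν) 0 with h | h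
    · rw [max_eq_right h]
      have : -(f t / t) ≤ -b := by linarith
      calc 0 - f t / t ≤ -b := by linarith
        _ ≤ max (2*ν) (-b) := le_max_right _ _
    · rw [max_eq_left h]
      have : f t / t + 2*ν - f t / t = 2*ν := by ring
      rw [this]
      exact le_max_left _ _
  have hbdd2above : Filter.IsBoundedUnder (· ≤ ·) (𝓝[≠] (0:ℝ)) (fun t => f₂ t / t) :=
    ⟨max (2*ν) (-b), eventually_map.2 hub⟩
  have hbdd2below : Filter.IsBoundedUnder (· ≥ ·) (𝓝[≠] (0:ℝ)) (fun t => f₂ t / t) :=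
    ⟨2*ν, eventually_map.2 hge⟩
  have hliminf_ge : 2*ν ≤ Filter.liminf (fun t => f₂ t / t) (𝓝[≠] (0:ℝ)) :=
    le_liminf_of_le hbdd2above.isCoboundedUnder_ge hge
  have hliminf_le : Filter.liminf (fun t => f₂ t / t) (𝓝[≠] (0:ℝ)) ≤ 2*ν := by
    apply le_of_forall_pos_le_add
    intro ε hε
    apply liminf_le_of_frequently_le _ hbdd2below
    have hfreq : ∃ᶠ t in 𝓝[≠] (0:ℝ), L - ε < f t / t :=
      frequently_lt_of_lt_limsup hbdd_below.isCoboundedUnder_le (by linarith)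
    apply (hfreq.and_eventually self_mem_nhdsWithin).mono
    rintro t ⟨ht, ht0⟩
    replace ht0 : t ≠ 0 := ht0
    rw [hL2] at ht
    rw [hkey2 t ht0]
    rcases le_total (f t / t + 2*ν) 0 with h | h
    · rw [max_eq_right h]; linarith
    · rw [max_eq_left h]; linarith
  have hliminf : Filter.liminf (fun t => f₂ t / t) (𝓝[≠] (0:ℝ)) = 2*ν :=
    le_antisymm hliminf_le hliminf_ge
  exact ⟨hν0, hcont1, hodd1, hcont2, hodd2, htend, hineq, hliminf,
    liminf_le_limsup hbdd2above hbdd2below, hbdd2above⟩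
end

section
/- Let N ≥ 1 be an integer, c > 0, and let q : ℝ → [0, ∞) be a continuous function. Let u and (u_n)_{n≥1} be Lebesgue measurable functions from ℝ^N to ℝ such that u_n(x) → u(x) for almost every x ∈ ℝ^N, ∫_{ℝ^N} (2c·u_n(x)² + q(u_n(x))) dx < +∞ for every n, ∫_{ℝ^N} (2c·u(x)² + q(u(x))) dx < +∞, and ∫_{ℝ^N} (2c·u_n(x)² + q(u_n(x))) dx → ∫_{ℝ^N} (2c·u(x)² + q(u(x))) dx as n → +∞. Then ∫_{ℝ^N} u_n(x)² dx → ∫_{ℝ^N} u(x)² dx as n → +∞. -/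
open MeasureTheory Filter Topology

/-- Real-valued Fatou lemma for a.e. convergent sequences of nonnegative integrable
functions whose integrals are bounded above. -/
lemma fatou_real_aux {α : Type*} [MeasurableSpace α] {μ : Measure α}
    {f : ℕ → α → ℝ} {g : α → ℝ}
    (hfm : ∀ n, AEMeasurable (f n) μ) (hf0 : ∀ n, 0 ≤ᵐ[μ] f n)
    (hfi : ∀ n, Integrable (f n) μ)
    (hgi : Integrable g μ) (hg0 : 0 ≤ᵐ[μ] g)
    (haet : ∀ᵐ x ∂μ, Tendsto (fun n => f n x) atTop (𝓝 (g x)))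
    (hbdd : IsBoundedUnder (· ≤ ·) atTop (fun n => ∫ x, f n x ∂μ)) :
    ∫ x, g x ∂μ ≤ liminf (fun n => ∫ x, f n x ∂μ) atTop := by
  set A : ℕ → ℝ := fun n => ∫ x, f n x ∂μ with hA
  have hAbdd_below : IsBoundedUnder (· ≥ ·) atTop A :=
    isBoundedUnder_of ⟨0, fun n => integral_nonneg_of_ae (hf0 n)⟩
  have hcobdd : IsCoboundedUnder (· ≥ ·) atTop A := hbdd.isCoboundedUnder_ge
  have hliminf_nonneg : 0 ≤ liminf A atTop :=
    le_liminf_of_le hcobdd (Eventually.of_forall fun n => integral_nonneg_of_ae (hf0 n))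
  have key : ENNReal.ofReal (∫ x, g x ∂μ) ≤
      liminf (fun n => ENNReal.ofReal (A n)) atTop := by
    rw [ofReal_integral_eq_lintegral_ofReal hgi hg0]
    have h1 : ∫⁻ x, ENNReal.ofReal (g x) ∂μ
        = ∫⁻ x, liminf (fun n => ENNReal.ofReal (f n x)) atTop ∂μ := by
      refine lintegral_congr_ae ?_
      filter_upwards [haet] with x hx
      exact ((ENNReal.continuous_ofReal.tendsto _).comp hx).liminf_eq.symm
    rw [h1]
    refine (lintegral_liminf_le' fun n => (hfm n).ennreal_ofReal).trans ?_
    refine le_of_eq (liminf_congr ?_)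
    exact Eventually.of_forall fun n =>
      (ofReal_integral_eq_lintegral_ofReal (hfi n) (hf0 n)).symm
  have hmap : ENNReal.ofReal (liminf A atTop)
      = liminf (fun n => ENNReal.ofReal (A n)) atTop := by
    have hmono : Monotone ENNReal.ofReal := fun _ _ h => ENNReal.ofReal_le_ofReal h
    have := hmono.map_liminf_of_continuousAt A
      (ENNReal.continuous_ofReal.continuousAt) hcobdd hAbdd_below
    exact this
  rw [← hmap] at key
  exact (ENNReal.ofReal_le_ofReal_iff hliminf_nonneg).mp key

theorem stmt_12 (N : ℕ) (hN : 1 ≤ N) (c : ℝ) (hc : 0 < c) (q : ℝ → ℝ)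
    (hq : Continuous q) (hq0 : ∀ t, 0 ≤ q t)
    (u : EuclideanSpace ℝ (Fin N) → ℝ) (un : ℕ → EuclideanSpace ℝ (Fin N) → ℝ)
    (hm : ∀ n, Measurable (un n)) (hmu : Measurable u)
    (hae : ∀ᵐ x ∂volume, Tendsto (fun n => un n x) atTop (𝓝 (u x)))
    (hint : ∀ n, Integrable (fun x => 2*c*(un n x)^2 + q (un n x)) volume)
    (hintu : Integrable (fun x => 2*c*(u x)^2 + q (u x)) volume)
    (hconv : Tendsto (fun n => ∫ x, (2*c*(un n x)^2 + q (un n x)) ∂volume) atTop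
      (𝓝 (∫ x, (2*c*(u x)^2 + q (u x)) ∂volume))) :
    Tendsto (fun n => ∫ x, (un n x)^2 ∂volume) atTop (𝓝 (∫ x, (u x)^2 ∂volume)) := by
  have h2c : (0:ℝ) < 2*c := by linarith
  -- measurability
  have hmA : ∀ n, Measurable (fun x => 2*c*(un n x)^2) :=
    fun n => ((hm n).pow_const 2).const_mul _
  have hmB : ∀ n, Measurable (fun x => q (un n x)) :=
    fun n => hq.measurable.comp (hm n)
  have hmAu : Measurable (fun x => 2*c*(u x)^2) := (hmu.pow_const 2).const_mul _
  have hmBu : Measurable (fun x => q (u x)) := hq.measurable.comp hmu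
  -- pointwise nonnegativity
  have hnnA : ∀ n x, (0:ℝ) ≤ 2*c*(un n x)^2 :=
    fun n x => mul_nonneg h2c.le (sq_nonneg _)
  have hnnAu : ∀ x, (0:ℝ) ≤ 2*c*(u x)^2 := fun x => mul_nonneg h2c.le (sq_nonneg _)
  -- integrability of the pieces
  have hiA : ∀ n, Integrable (fun x => 2*c*(un n x)^2) volume := by
    intro n
    refine (hint n).mono (hmA n).aestronglyMeasurable ?_
    refine Eventually.of_forall fun x => ?_
    rw [Real.norm_eq_abs, Real.norm_eq_abs, abs_of_nonneg (hnnA n x),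
      abs_of_nonneg (add_nonneg (hnnA n x) (hq0 _))]
    have := hq0 (un n x); linarith
  have hiB : ∀ n, Integrable (fun x => q (un n x)) volume := by
    intro n
    refine (hint n).mono (hmB n).aestronglyMeasurable ?_
    refine Eventually.of_forall fun x => ?_
    rw [Real.norm_eq_abs, Real.norm_eq_abs, abs_of_nonneg (hq0 _),
      abs_of_nonneg (add_nonneg (hnnA n x) (hq0 _))]
    have := hnnA n x; linarith
  have hiAu : Integrable (fun x => 2*c*(u x)^2) volume := by
    refine hintu.mono hmAu.aestronglyMeasurable ?_
    refine Eventually.of_forall fun x => ?_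
    rw [Real.norm_eq_abs, Real.norm_eq_abs, abs_of_nonneg (hnnAu x),
      abs_of_nonneg (add_nonneg (hnnAu x) (hq0 _))]
    have := hq0 (u x); linarith
  have hiBu : Integrable (fun x => q (u x)) volume := by
    refine hintu.mono hmBu.aestronglyMeasurable ?_
    refine Eventually.of_forall fun x => ?_
    rw [Real.norm_eq_abs, Real.norm_eq_abs, abs_of_nonneg (hq0 _),
      abs_of_nonneg (add_nonneg (hnnAu x) (hq0 _))]
    have := hnnAu x; linarith
  set A : ℕ → ℝ := fun n => ∫ x, 2*c*(un n x)^2 ∂volume with hA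
  set B : ℕ → ℝ := fun n => ∫ x, q (un n x) ∂volume with hB
  set Au : ℝ := ∫ x, 2*c*(u x)^2 ∂volume with hAu'
  set Bu : ℝ := ∫ x, q (u x) ∂volume with hBu'
  have hsplit : ∀ n, (∫ x, (2*c*(un n x)^2 + q (un n x)) ∂volume) = A n + B n :=
    fun n => integral_add (hiA n) (hiB n)
  have hsplitu : (∫ x, (2*c*(u x)^2 + q (u x)) ∂volume) = Au + Bu :=
    integral_add hiAu hiBu
  have hS : Tendsto (fun n => A n + B n) atTop (𝓝 (Au + Bu)) := by
    rw [← hsplitu]; exact hconv.congr hsplit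
  -- boundedness
  have hSbdd : IsBoundedUnder (· ≤ ·) atTop (fun n => A n + B n) :=
    hS.isBoundedUnder_le
  have hAnn : ∀ n, 0 ≤ A n := fun n => integral_nonneg (fun x => hnnA n x)
  have hBnn : ∀ n, 0 ≤ B n := fun n => integral_nonneg (fun x => hq0 _)
  have hAbdd : IsBoundedUnder (· ≤ ·) atTop A := by
    obtain ⟨M, hM⟩ := hSbdd
    rw [eventually_map] at hM
    refine ⟨M, eventually_map.2 ?_⟩
    filter_upwards [hM] with n hn
    have := hBnn n
    linarith
  have hBbdd : IsBoundedUnder (· ≤ ·) atTop B := by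
    obtain ⟨M, hM⟩ := hSbdd
    rw [eventually_map] at hM
    refine ⟨M, eventually_map.2 ?_⟩
    filter_upwards [hM] with n hn
    have := hAnn n
    linarith
  have hAbelow : IsBoundedUnder (· ≥ ·) atTop A := isBoundedUnder_of ⟨0, hAnn⟩
  have hBbelow : IsBoundedUnder (· ≥ ·) atTop B := isBoundedUnder_of ⟨0, hBnn⟩
  -- a.e. convergence of the pieces
  have haeA : ∀ᵐ x ∂(volume : Measure (EuclideanSpace ℝ (Fin N))),
      Tendsto (fun n => 2*c*(un n x)^2) atTop (𝓝 (2*c*(u x)^2)) := by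
    filter_upwards [hae] with x hx
    exact (hx.pow 2).const_mul _
  have haeB : ∀ᵐ x ∂(volume : Measure (EuclideanSpace ℝ (Fin N))),
      Tendsto (fun n => q (un n x)) atTop (𝓝 (q (u x))) := by
    filter_upwards [hae] with x hx
    exact (hq.tendsto _).comp hx
  -- Fatou for both pieces
  have hFatouA : Au ≤ liminf A atTop :=
    fatou_real_aux (fun n => (hmA n).aemeasurable)
      (fun n => Eventually.of_forall (hnnA n)) hiA hiAu
      (Eventually.of_forall hnnAu) haeA hAbdd
  have hFatouB : Bu ≤ liminf B atTop :=
    fatou_real_aux (fun n => (hmB n).aemeasurable)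
      (fun n => Eventually.of_forall fun x => hq0 _) hiB hiBu
      (Eventually.of_forall fun x => hq0 _) haeB hBbdd
  -- limsup A ≤ Au
  have hsum_limsup : limsup (fun n => A n + B n) atTop = Au + Bu := hS.limsup_eq
  have hkey : limsup A atTop + liminf B atTop ≤ Au + Bu := by
    rw [← hsum_limsup]
    exact le_limsup_add hAbdd hAbelow.isCoboundedUnder_le hBbdd hBbelow
  have hlimsupA : limsup A atTop ≤ Au := by
    have : limsup A atTop + Bu ≤ Au + Bu :=
      le_trans (add_le_add_right hFatouB _) hkey
    linarith
  have hTA : Tendsto A atTop (𝓝 Au) :=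
    tendsto_of_le_liminf_of_limsup_le hFatouA hlimsupA hAbdd hAbelow
  -- conclude by dividing by 2c
  have hres : (fun n => ∫ x, (un n x)^2 ∂volume) = fun n => A n / (2*c) := by
    funext n
    rw [hA]
    simp only [integral_const_mul]
    field_simp
  have hresu : (∫ x, (u x)^2 ∂volume) = Au / (2*c) := by
    rw [hAu']
    simp only [integral_const_mul]
    field_simp
  rw [hres, hresu]
  exact hTA.div_const _
end

section
/- Let f : ℝ → ℝ be continuous and odd, let ν > 0 with limsup_{t→0⁺} f(t)/t < −ν, and let p₀ > 1. Define h(t) := max{νt + f(t), 0} for t ≥ 0 and h(t) := min{νt + f(t), 0} for t < 0; define h̄(t) := t^{p₀}·sup_{0 < τ ≤ t} h(τ)/τ^{p₀} for t > 0, h̄(0) := 0, h̄(t) := −h̄(−t) for t < 0; and set H̄(t) := ∫₀ᵗ h̄(τ) dτ. Then: (a) there exists δ > 0 such that h(t) = h̄(t) = 0 for all t with |t| ≤ δ; (b) (1/2)·ν·t² + F(t) ≤ H̄(t) for all t ∈ ℝ; (c) 0 ≤ (p₀ + 1)·H̄(t) ≤ h̄(t)·t for all t ∈ ℝ. -/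
open Filter Topology

theorem stmt_15 (f : ℝ → ℝ) (hf : Continuous f) (hodd : ∀ t, f (-t) = -f t)
    (ν : ℝ) (hνpos : 0 < ν)
    (hlimsup : Filter.limsup (fun t => f t / t) (𝓝[>] (0:ℝ)) < -ν)
    (p₀ : ℝ) (hp₀ : 1 < p₀)
    (h hbar Hbar : ℝ → ℝ)
    (hh : ∀ t, h t = if 0 ≤ t then max (ν*t + f t) 0 else min (ν*t + f t) 0)
    (hhbar_pos : ∀ t : ℝ, 0 < t →
      hbar t = t ^ p₀ * sSup ((fun τ : ℝ => h τ / τ ^ p₀) '' Set.Ioc 0 t))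
    (hhbar_zero : hbar 0 = 0)
    (hhbar_neg : ∀ t : ℝ, t < 0 → hbar t = -hbar (-t))
    (hHbar : ∀ t, Hbar t = ∫ τ in (0:ℝ)..t, hbar τ) :
    (∃ δ > (0:ℝ), ∀ t : ℝ, |t| ≤ δ → h t = 0 ∧ hbar t = 0) ∧
    (∀ t : ℝ, (1/2)*ν*t^2 + (∫ τ in (0:ℝ)..t, f τ) ≤ Hbar t) ∧
    (∀ t : ℝ, 0 ≤ (p₀+1) * Hbar t ∧ (p₀+1) * Hbar t ≤ hbar t * t) := by
  have hf0 : f 0 = 0 := by have := hodd 0; simp at this; linarith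
  -- obtain δ with h = 0 on (0, δ]
  obtain ⟨δ, hδpos, hδ⟩ : ∃ δ > (0:ℝ), ∀ τ : ℝ, 0 < τ → τ ≤ δ → h τ = 0 := by
    have hev : ∀ᶠ t in 𝓝[>] (0:ℝ), f t / t ≤ -ν := by
      rw [Filter.limsup_eq] at hlimsup
      have hne : {a : ℝ | ∀ᶠ n in 𝓝[>] (0:ℝ), f n / n ≤ a}.Nonempty := by
        by_contra hemp
        rw [Set.not_nonempty_iff_eq_empty] at hemp
        rw [hemp, Real.sInf_empty] at hlimsup; linarith
      obtain ⟨a, haS, ha⟩ := exists_lt_of_csInf_lt hne hlimsup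
      have haS' : ∀ᶠ n in 𝓝[>] (0:ℝ), f n / n ≤ a := haS
      exact haS'.mono fun t ht => le_trans ht ha.le
    rw [eventually_iff, mem_nhdsGT_iff_exists_Ioc_subset] at hev
    obtain ⟨u, hu, hsub⟩ := hev
    refine ⟨u, hu, fun τ h1 h2 => ?_⟩
    have hle : f τ / τ ≤ -ν := hsub ⟨h1, h2⟩
    rw [div_le_iff₀ h1] at hle
    rw [hh, if_pos h1.le]
    exact max_eq_right (by nlinarith)
  have hδ' : ∀ t : ℝ, |t| ≤ δ → h t = 0 := by
    intro t ht
    rcases lt_trichotomy t 0 with h1 | rfl | h1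
    · have h2 : (0:ℝ) < -t := by linarith
      have h3 : -t ≤ δ := by rw [abs_of_neg h1] at ht; exact ht
      have h4 := hδ (-t) h2 h3
      rw [hh, if_pos h2.le] at h4
      have h5 : ν * (-t) + f (-t) ≤ 0 := by
        by_contra hc; push_neg at hc
        rw [max_eq_left hc.le] at h4; linarith
      rw [hodd] at h5
      rw [hh, if_neg (not_le.mpr h1)]
      exact min_eq_right (by linarith)
    · rw [hh]; simp [hf0]
    · exact hδ t h1 (by rwa [abs_of_pos h1] at ht)
  -- boundedness of the sup set
  have hcont : ∀ a b : ℝ, 0 < a → ContinuousOn (fun τ : ℝ => h τ / τ ^ p₀) (Set.Icc a b) := by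
    intro a b ha
    have hhc : ContinuousOn h (Set.Icc a b) := by
      apply ContinuousOn.congr
        (f := fun τ : ℝ => max (ν*τ + f τ) 0)
        (Continuous.continuousOn (((continuous_const.mul continuous_id).add hf).max continuous_const))
      intro x hx
      rw [hh, if_pos (le_trans ha.le hx.1)]
    apply hhc.div
    · exact (continuousOn_id.rpow_const (fun x hx => Or.inl (by
        have : 0 < x := lt_of_lt_of_le ha hx.1; exact this.ne')))
    · intro x hx
      exact (Real.rpow_pos_of_pos (lt_of_lt_of_le ha hx.1) p₀).ne'
  have hbdd : ∀ t : ℝ, 0 < t → BddAbove ((fun τ : ℝ => h τ / τ ^ p₀) '' Set.Ioc 0 t) := by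
    intro t ht
    obtain ⟨M, hM⟩ : BddAbove ((fun τ : ℝ => h τ / τ ^ p₀) '' Set.Icc (min δ t) t) :=
      isCompact_Icc.bddAbove_image (hcont _ _ (lt_min hδpos ht))
    refine ⟨max M 0, fun x hx => ?_⟩
    obtain ⟨τ, hτ, rfl⟩ := hx
    rcases le_or_gt τ δ with hc | hc
    · show h τ / τ ^ p₀ ≤ max M 0
      rw [hδ τ hτ.1 hc, zero_div]; exact le_max_right _ _
    · exact le_trans (hM ⟨τ, ⟨(min_le_left δ t).trans hc.le, hτ.2⟩, rfl⟩) (le_max_left _ _)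
  have hS0 : ∀ t : ℝ, 0 < t → 0 ≤ sSup ((fun τ : ℝ => h τ / τ ^ p₀) '' Set.Ioc 0 t) := by
    intro t ht
    apply le_csSup (hbdd t ht)
    refine ⟨min δ t, ⟨lt_min hδpos ht, min_le_right _ _⟩, ?_⟩
    show h (min δ t) / (min δ t) ^ p₀ = 0
    rw [hδ _ (lt_min hδpos ht) (min_le_left _ _), zero_div]
  have hbar_ge_h : ∀ t : ℝ, 0 < t → h t ≤ hbar t := by
    intro t ht
    have h1 : h t / t ^ p₀ ≤ sSup ((fun τ : ℝ => h τ / τ ^ p₀) '' Set.Ioc 0 t) :=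
      le_csSup (hbdd t ht) ⟨t, ⟨ht, le_refl t⟩, rfl⟩
    have h2 : (0:ℝ) < t ^ p₀ := Real.rpow_pos_of_pos ht p₀
    rw [hhbar_pos t ht]
    calc h t = t ^ p₀ * (h t / t ^ p₀) := by field_simp
    _ ≤ _ := mul_le_mul_of_nonneg_left h1 h2.le
  have hbar_nonneg : ∀ t : ℝ, 0 ≤ t → 0 ≤ hbar t := by
    intro t ht
    rcases eq_or_lt_of_le ht with rfl | ht
    · rw [hhbar_zero]
    · rw [hhbar_pos t ht]
      exact mul_nonneg (Real.rpow_pos_of_pos ht p₀).le (hS0 t ht)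
  have hSmono : ∀ s t : ℝ, 0 < s → s ≤ t →
      sSup ((fun τ : ℝ => h τ / τ ^ p₀) '' Set.Ioc 0 s) ≤
      sSup ((fun τ : ℝ => h τ / τ ^ p₀) '' Set.Ioc 0 t) := by
    intro s t hs hst
    exact csSup_le_csSup (hbdd t (lt_of_lt_of_le hs hst))
      ((Set.nonempty_Ioc.mpr hs).image _)
      (Set.image_mono (Set.Ioc_subset_Ioc_right hst))
  have hmono_pos : ∀ s t : ℝ, 0 < s → s ≤ t → hbar s ≤ hbar t := by
    intro s t hs hst
    have ht : 0 < t := lt_of_lt_of_le hs hst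
    rw [hhbar_pos s hs, hhbar_pos t ht]
    exact mul_le_mul (Real.rpow_le_rpow hs.le hst (by linarith)) (hSmono s t hs hst)
      (hS0 s hs) (Real.rpow_pos_of_pos ht p₀).le
  have hmono : Monotone hbar := by
    intro s t hst
    rcases lt_trichotomy s 0 with hs | rfl | hs
    · rcases lt_trichotomy t 0 with ht | rfl | ht
      · rw [hhbar_neg s hs, hhbar_neg t ht]
        have := hmono_pos (-t) (-s) (by linarith) (by linarith)
        linarith
      · rw [hhbar_neg s hs, hhbar_zero]
        have := hbar_nonneg (-s) (by linarith)
        linarith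
      · rw [hhbar_neg s hs]
        have h1 := hbar_nonneg (-s) (by linarith)
        have h2 := hbar_nonneg t ht.le
        linarith
    · rw [hhbar_zero]; exact hbar_nonneg t hst
    · exact hmono_pos s t hs hst
  have hbar_odd : ∀ t : ℝ, hbar (-t) = -hbar t := by
    intro t
    rcases lt_trichotomy t 0 with ht | rfl | ht
    · have := hhbar_neg t ht; linarith
    · rw [neg_zero, hhbar_zero, neg_zero]
    · rw [hhbar_neg (-t) (by linarith), neg_neg]
  have Hbar_even : ∀ t : ℝ, Hbar (-t) = Hbar t := by
    intro t
    rw [hHbar, hHbar]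
    calc ∫ τ in (0:ℝ)..(-t), hbar τ
        = ∫ τ in (0:ℝ)..(-t), -hbar (-τ) := by
          apply intervalIntegral.integral_congr
          intro τ _
          show hbar τ = -hbar (-τ)
          rw [hbar_odd]; ring
      _ = -∫ τ in (0:ℝ)..(-t), hbar (-τ) := intervalIntegral.integral_neg
      _ = -∫ τ in t..(0:ℝ), hbar τ := by
          rw [intervalIntegral.integral_comp_neg]; norm_num
      _ = ∫ τ in (0:ℝ)..t, hbar τ := by
          rw [intervalIntegral.integral_symm]; ring
  have F_even : ∀ t : ℝ, (∫ τ in (0:ℝ)..(-t), f τ) = ∫ τ in (0:ℝ)..t, f τ := by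
    intro t
    calc ∫ τ in (0:ℝ)..(-t), f τ
        = ∫ τ in (0:ℝ)..(-t), -f (-τ) := by
          apply intervalIntegral.integral_congr
          intro τ _
          show f τ = -f (-τ)
          rw [hodd]; ring
      _ = -∫ τ in (0:ℝ)..(-t), f (-τ) := intervalIntegral.integral_neg
      _ = -∫ τ in t..(0:ℝ), f τ := by
          rw [intervalIntegral.integral_comp_neg]; norm_num
      _ = ∫ τ in (0:ℝ)..t, f τ := by
          rw [intervalIntegral.integral_symm]; ring
  -- part b for nonnegative t
  have hb_nonneg : ∀ t : ℝ, 0 ≤ t →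
      (1/2)*ν*t^2 + (∫ τ in (0:ℝ)..t, f τ) ≤ Hbar t := by
    intro t ht
    rw [hHbar]
    have hint1 : IntervalIntegrable (fun τ : ℝ => ν * τ + f τ) MeasureTheory.volume 0 t :=
      ((continuous_const.mul continuous_id).add hf).intervalIntegrable _ _
    have hle : (∫ τ in (0:ℝ)..t, (ν * τ + f τ)) ≤ ∫ τ in (0:ℝ)..t, hbar τ := by
      apply intervalIntegral.integral_mono_on ht hint1 (hmono.intervalIntegrable : IntervalIntegrable hbar MeasureTheory.volume 0 t)
      intro τ hτ
      rcases eq_or_lt_of_le hτ.1 with rfl | hτ0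
      · rw [hhbar_zero]; simp [hf0]
      · have h1 : ν * τ + f τ ≤ h τ := by
          rw [hh, if_pos hτ0.le]; exact le_max_left _ _
        exact h1.trans (hbar_ge_h τ hτ0)
    have heq : (∫ τ in (0:ℝ)..t, (ν * τ + f τ))
        = (1/2)*ν*t^2 + ∫ τ in (0:ℝ)..t, f τ := by
      have h1 : IntervalIntegrable (fun τ : ℝ => ν * τ) MeasureTheory.volume 0 t :=
        (continuous_const.mul continuous_id').intervalIntegrable _ _
      rw [intervalIntegral.integral_add h1 (hf.intervalIntegrable _ _),
        intervalIntegral.integral_const_mul, integral_id]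
      ring
    linarith
  -- part c for positive t
  have hc_pos : ∀ t : ℝ, 0 < t →
      0 ≤ (p₀+1) * Hbar t ∧ (p₀+1) * Hbar t ≤ hbar t * t := by
    intro t ht
    have hp1 : (0:ℝ) < p₀ + 1 := by linarith
    have hM0 : 0 ≤ sSup ((fun τ : ℝ => h τ / τ ^ p₀) '' Set.Ioc 0 t) := hS0 t ht
    set M := sSup ((fun τ : ℝ => h τ / τ ^ p₀) '' Set.Ioc 0 t) with hMdef
    have hup : (∫ τ in (0:ℝ)..t, hbar τ) ≤ ∫ τ in (0:ℝ)..t, τ ^ p₀ * M := by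
      apply intervalIntegral.integral_mono_on ht.le (hmono.intervalIntegrable : IntervalIntegrable hbar MeasureTheory.volume 0 t)
      · exact (intervalIntegral.intervalIntegrable_rpow (Or.inl (by linarith))).mul_const M
      · intro τ hτ
        rcases eq_or_lt_of_le hτ.1 with rfl | hτ0
        · rw [hhbar_zero, Real.zero_rpow (by linarith), zero_mul]
        · rw [hhbar_pos τ hτ0]
          exact mul_le_mul_of_nonneg_left (hSmono τ t hτ0 hτ.2)
            (Real.rpow_pos_of_pos hτ0 p₀).le
    have hval : (∫ τ in (0:ℝ)..t, τ ^ p₀ * M) = t ^ (p₀+1) / (p₀+1) * M := by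
      rw [intervalIntegral.integral_mul_const, integral_rpow (Or.inl (by linarith)),
        Real.zero_rpow (by linarith)]
      ring
    have htp : t ^ (p₀ + 1) = t ^ p₀ * t := by
      rw [Real.rpow_add ht, Real.rpow_one]
    have hnn : 0 ≤ ∫ τ in (0:ℝ)..t, hbar τ :=
      intervalIntegral.integral_nonneg ht.le (fun τ hτ => hbar_nonneg τ hτ.1)
    rw [hHbar, hhbar_pos t ht]
    constructor
    · positivity
    · have h3 : (∫ τ in (0:ℝ)..t, hbar τ) ≤ t ^ (p₀+1) / (p₀+1) * M := hval ▸ hup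
      have h4 : (p₀+1) * (t ^ (p₀+1) / (p₀+1) * M) = t ^ p₀ * M * t := by
        rw [htp]; field_simp
      calc (p₀+1) * ∫ τ in (0:ℝ)..t, hbar τ
          ≤ (p₀+1) * (t ^ (p₀+1) / (p₀+1) * M) := mul_le_mul_of_nonneg_left h3 hp1.le
        _ = t ^ p₀ * M * t := h4
  have Hbar0 : Hbar 0 = 0 := by rw [hHbar]; simp
  -- part a
  have hbar_small : ∀ t : ℝ, 0 < t → t ≤ δ → hbar t = 0 := by
    intro t ht htδ
    rw [hhbar_pos t ht]
    have himg : (fun τ : ℝ => h τ / τ ^ p₀) '' Set.Ioc 0 t = {0} := by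
      apply Set.eq_singleton_iff_nonempty_unique_mem.mpr
      refine ⟨(Set.nonempty_Ioc.mpr ht).image _, ?_⟩
      rintro x ⟨τ, hτ, rfl⟩
      show h τ / τ ^ p₀ = 0
      rw [hδ τ hτ.1 (hτ.2.trans htδ), zero_div]
    rw [himg, csSup_singleton, mul_zero]
  refine ⟨⟨δ, hδpos, fun t ht => ⟨hδ' t ht, ?_⟩⟩, ?_, ?_⟩
  · rcases lt_trichotomy t 0 with h1 | rfl | h1
    · rw [hhbar_neg t h1, hbar_small (-t) (by linarith) (by rw [abs_of_neg h1] at ht; linarith),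
        neg_zero]
    · exact hhbar_zero
    · exact hbar_small t h1 (by rwa [abs_of_pos h1] at ht)
  · intro t
    rcases le_or_gt 0 t with ht | ht
    · exact hb_nonneg t ht
    · have h1 := hb_nonneg (-t) (by linarith)
      rw [F_even t, Hbar_even t, neg_sq] at h1
      exact h1
  · intro t
    rcases lt_trichotomy t 0 with ht | rfl | ht
    · have h1 := hc_pos (-t) (by linarith)
      rw [Hbar_even t, hbar_odd t, neg_mul_neg] at h1
      exact h1
    · simp [Hbar0, hhbar_zero]
    · exact hc_pos t ht
end
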